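/- Let γ = ∏_{j=1}^∞ (1 - 2^{-j}) and fix an integer a ≥ 1. For every integer m there exist n ≥ m and a set U ⊆ F_2^n of 2^m distinct nonzero vectors such that, writing p_m for the probability that a uniformly random linear map B : F_2^n → F_2^m satisfies |{u ∈ U : B u = 0}| > 2^a - 2, one has liminf_{m→∞} p_m ≥ γ^{-1} 2^{-a^2} (1 - 2^{-a})^2. -/

import Mathlib

/-- The space of F_2-linear maps from F_2^n to F_2^m. -/
abbrev Lin (n m : ℕ) := (Fin n → ZMod 2) →ₗ[ZMod 2] (Fin m → ZMod 2)

/-- γ = ∏_{j=1}^∞ (1 - 2^{-j}). -/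
noncomputable def gammaProd : ℝ := ∏' j : ℕ, (1 - (2 : ℝ)⁻¹ ^ (j + 1))


abbrev F2 := ZMod 2

noncomputable instance instFinLin (n m : ℕ) : Fintype (Lin n m) :=
  Fintype.ofEquiv _ (LinearMap.toMatrix' (R := F2) (m := Fin m) (n := Fin n)).toEquiv.symm

lemma card_Lin (n m : ℕ) : Nat.card (Lin n m) = 2 ^ (m * n) := by
  rw [Nat.card_congr (LinearMap.toMatrix' (R := F2) (m := Fin m) (n := Fin n)).toEquiv]
  rw [Nat.card_eq_fintype_card]
  rw [show Fintype.card (Matrix (Fin m) (Fin n) F2)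
      = Fintype.card (Fin m → Fin n → F2) from rfl]
  simp only [Fintype.card_fun, Fintype.card_fin, ZMod.card]
  rw [← pow_mul, Nat.mul_comm]

lemma finrank_fun (m : ℕ) : Module.finrank F2 (Fin m → F2) = m := by
  simp

lemma injective_iff_li {r m : ℕ} (f : Lin r m) :
    Function.Injective f ↔
      LinearIndependent F2 (fun i => f ((Pi.basisFun F2 (Fin r)) i)) := by
  constructor
  · intro hf
    exact (Pi.basisFun F2 (Fin r)).linearIndependent.map' f (LinearMap.ker_eq_bot.mpr hf)
  · intro h
    rw [← LinearMap.ker_eq_bot, eq_bot_iff]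
    intro x hx
    have hxr : (∑ i, x i • (Pi.basisFun F2 (Fin r)) i) = x := by
      simpa [Pi.basisFun_repr] using (Pi.basisFun F2 (Fin r)).sum_repr x
    have h0 : ∑ i, x i • f ((Pi.basisFun F2 (Fin r)) i) = 0 := by
      calc ∑ i, x i • f ((Pi.basisFun F2 (Fin r)) i)
          = f (∑ i, x i • (Pi.basisFun F2 (Fin r)) i) := by
            rw [map_sum]; simp [map_smul]
        _ = f x := by rw [hxr]
        _ = 0 := hx
    have := Fintype.linearIndependent_iff.mp h x h0
    simp only [Submodule.mem_bot]
    funext i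
    exact this i

lemma card_inj (r m : ℕ) (h : r ≤ m) :
    Nat.card {f : Lin r m // Function.Injective f}
      = ∏ i ∈ Finset.range r, (2 ^ m - 2 ^ i) := by
  have e : {v : Fin r → (Fin m → F2) // LinearIndependent F2 v}
      ≃ {f : Lin r m // Function.Injective f} := by
    refine Equiv.subtypeEquiv ((Pi.basisFun F2 (Fin r)).constr F2).toEquiv (fun v => ?_)
    rw [injective_iff_li]
    have : (fun i => ((Pi.basisFun F2 (Fin r)).constr F2 v) ((Pi.basisFun F2 (Fin r)) i)) = v :=
      funext fun i => Module.Basis.constr_basis _ _ _ _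
    simp only [LinearEquiv.coe_toEquiv]
    rw [this]
  rw [← Nat.card_congr e, card_linearIndependent (by simpa using h)]
  rw [← Fin.prod_univ_eq_prod_range (fun i => 2 ^ m - 2 ^ i) r]
  simp [ZMod.card]

lemma surjective_iff_rank {m r : ℕ} (f : Lin m r) :
    Function.Surjective f ↔ (LinearMap.toMatrix' f).rank = r := by
  rw [Matrix.rank, ← Matrix.toLin'_apply', Matrix.toLin'_toMatrix']
  constructor
  · intro hf
    rw [LinearMap.range_eq_top.mpr hf, finrank_top]
    simp
  · intro hf
    rw [← LinearMap.range_eq_top]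
    apply Submodule.eq_top_of_finrank_eq
    rw [hf]; simp

lemma injective_iff_rank {r m : ℕ} (g : Lin r m) :
    Function.Injective g ↔ (LinearMap.toMatrix' g).rank = r := by
  rw [Matrix.rank, ← Matrix.toLin'_apply', Matrix.toLin'_toMatrix']
  have hrn := LinearMap.finrank_range_add_finrank_ker g
  rw [finrank_fun] at hrn
  constructor
  · intro hg
    have : LinearMap.ker g = ⊥ := LinearMap.ker_eq_bot.mpr hg
    rw [this] at hrn
    simpa using hrn
  · intro hg
    rw [← LinearMap.ker_eq_bot, ← Submodule.finrank_eq_zero (R := ZMod 2)]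
    rw [hg] at hrn
    omega

lemma card_surj (r m : ℕ) (h : r ≤ m) :
    Nat.card {f : Lin m r // Function.Surjective f}
      = ∏ i ∈ Finset.range r, (2 ^ m - 2 ^ i) := by
  have e : {f : Lin m r // Function.Surjective f} ≃ {g : Lin r m // Function.Injective g} := by
    refine Equiv.subtypeEquiv
      (LinearMap.toMatrix'.toEquiv.trans
        ((Equiv.mk (fun A : Matrix (Fin r) (Fin m) F2 => Matrix.transpose A)
            (fun A => Matrix.transpose A) (fun A => Matrix.transpose_transpose A)
            (fun A => Matrix.transpose_transpose A)).trans
          (LinearMap.toMatrix' (R := F2)).symm.toEquiv)) (fun f => ?_)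
    rw [surjective_iff_rank, injective_iff_rank]
    simp only [Equiv.trans_apply, LinearEquiv.coe_toEquiv, Equiv.coe_fn_mk]
    rw [LinearMap.toMatrix'_symm]
    rw [LinearMap.toMatrix'_toLin', Matrix.rank_transpose]
  rw [Nat.card_congr e, card_inj r m h]

lemma card_autos (r : ℕ) :
    Nat.card ((Fin r → F2) ≃ₗ[F2] (Fin r → F2)) = ∏ i ∈ Finset.range r, (2 ^ r - 2 ^ i) := by
  have e : GL (Fin r) F2 ≃ ((Fin r → F2) ≃ₗ[F2] (Fin r → F2)) :=
    (Matrix.GeneralLinearGroup.toLin.trans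
      (LinearMap.GeneralLinearGroup.generalLinearEquiv F2 (Fin r → F2))).toEquiv
  rw [← Nat.card_congr e, Matrix.card_GL_field]
  rw [← Fin.prod_univ_eq_prod_range (fun i => 2 ^ r - 2 ^ i) r]
  simp [ZMod.card]

open Finset in
lemma card_le_mul_of_fibers {α β : Type*} [Fintype α] [Fintype β] (f : α → β) (k : ℕ)
    (h : ∀ b : β, Nat.card {x : α // f x = b} ≤ k) : Nat.card α ≤ k * Nat.card β := by
  classical
  calc Nat.card α = ∑ b : β, Nat.card {x : α // f x = b} := by
        rw [Nat.card_congr (Equiv.sigmaFiberEquiv f).symm, Nat.card_eq_fintype_card,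
          Fintype.card_sigma]
        refine Finset.sum_congr rfl fun b _ => ?_
        rw [Nat.card_eq_fintype_card]
    _ ≤ ∑ _b : β, k := Finset.sum_le_sum fun b _ => h b
    _ = k * Nat.card β := by
        simp [Nat.card_eq_fintype_card, mul_comm]

lemma comp_count (a r m : ℕ) (hm : m = a + r) :
    (∏ i ∈ Finset.range r, (2 ^ m - 2 ^ i)) ^ 2
      ≤ (∏ i ∈ Finset.range r, (2 ^ r - 2 ^ i))
        * Nat.card {M : Lin m m // a ≤ Module.finrank (ZMod 2) (LinearMap.ker M)} := by
  classical
  have hfin : Finite ((Fin r → F2) ≃ₗ[F2] (Fin r → F2)) :=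
    Finite.of_injective (fun e => (e : Lin r r))
      (fun e f hef => by
        apply LinearEquiv.toLinearMap_injective hef)
  -- the composition map
  set Φ : ({f : Lin m r // Function.Surjective f} × {g : Lin r m // Function.Injective g})
      → {M : Lin m m // a ≤ Module.finrank (ZMod 2) (LinearMap.ker M)} :=
    fun p => ⟨p.2.1.comp p.1.1, by
      have hker : LinearMap.ker (p.2.1.comp p.1.1) = LinearMap.ker p.1.1 := by
        rw [LinearMap.ker_comp, LinearMap.ker_eq_bot.mpr p.2.2]
        rfl
      have hrn := LinearMap.finrank_range_add_finrank_ker p.1.1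
      rw [finrank_fun, LinearMap.range_eq_top.mpr p.1.2, finrank_top, finrank_fun] at hrn
      rw [hker]
      omega⟩ with hΦ
  -- fibers of Φ inject into linear automorphisms
  have hfib : ∀ M, Nat.card {p // Φ p = M} ≤ ∏ i ∈ Finset.range r, (2 ^ r - 2 ^ i) := by
    intro M
    rw [← card_autos r]
    rcases isEmpty_or_nonempty {p // Φ p = M} with hE | hNE
    · simp [Nat.card_of_isEmpty]
    obtain ⟨⟨⟨s₀, i₀⟩, h₀⟩⟩ := hNE
    have hrange : ∀ (p : {p // Φ p = M}),
        LinearMap.range (p.1.2.1) = LinearMap.range (M.1) := by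
      rintro ⟨⟨s, i⟩, hp⟩
      have : i.1.comp s.1 = M.1 := congrArg Subtype.val hp
      rw [← this, LinearMap.range_comp, LinearMap.range_eq_top.mpr s.2, Submodule.map_top]
    have key : ∀ (p : {p // Φ p = M}),
        LinearMap.range (p.1.2.1) = LinearMap.range (i₀.1) := by
      intro p
      rw [hrange p, ← hrange ⟨⟨s₀, i₀⟩, h₀⟩]
    refine Nat.card_le_card_of_injective
      (fun p => ((LinearEquiv.ofInjective p.1.2.1 p.1.2.2).trans
        ((LinearEquiv.ofEq _ _ (key p)).trans
          (LinearEquiv.ofInjective i₀.1 i₀.2).symm))) ?_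
    intro p q hpq
    -- recover i from the automorphism
    have hi : ∀ (p : {p // Φ p = M}) x,
        p.1.2.1 x = i₀.1 (((LinearEquiv.ofInjective p.1.2.1 p.1.2.2).trans
          ((LinearEquiv.ofEq _ _ (key p)).trans
            (LinearEquiv.ofInjective i₀.1 i₀.2).symm)) x) := by
      intro p x
      simp only [LinearEquiv.trans_apply, LinearEquiv.ofInjective_symm_apply,
        LinearEquiv.coe_ofEq_apply, LinearEquiv.ofInjective_apply]
    have hieq : p.1.2.1 = q.1.2.1 := by
      apply LinearMap.ext
      intro x
      rw [hi p x, hi q x]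
      exact congrArg (fun e => i₀.1 (e x)) hpq
    have hseq : p.1.1.1 = q.1.1.1 := by
      apply LinearMap.ext
      intro x
      apply p.1.2.2
      have hcp : p.1.2.1.comp p.1.1.1 = M.1 := congrArg Subtype.val p.2
      have hcq : q.1.2.1.comp q.1.1.1 = M.1 := congrArg Subtype.val q.2
      have := congrFun (congrArg (fun (f : Lin m m) => (f : (Fin m → F2) → Fin m → F2))
        (hcp.trans hcq.symm)) x
      simp only [LinearMap.coe_comp, Function.comp_apply] at this
      rw [this, hieq]
    apply Subtype.ext
    apply Prod.ext
    · exact Subtype.ext hseq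
    · exact Subtype.ext hieq
  have := card_le_mul_of_fibers Φ (∏ i ∈ Finset.range r, (2 ^ r - 2 ^ i)) hfib
  rw [Nat.card_prod, card_surj r m (by omega), card_inj r m (by omega)] at this
  calc (∏ i ∈ Finset.range r, (2 ^ m - 2 ^ i)) ^ 2
      = (∏ i ∈ Finset.range r, (2 ^ m - 2 ^ i)) * (∏ i ∈ Finset.range r, (2 ^ m - 2 ^ i)) := sq _
    _ ≤ _ := this

/-- The set `U`: nonzero vectors of the coordinate hyperplane, plus the last basis vector. -/
noncomputable def Uset (m : ℕ) : Finset (Fin (m+1) → F2) :=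
  ((Finset.univ.erase 0).image (fun y : Fin m → F2 => Fin.snoc y 0))
    ∪ {Pi.single (Fin.last m) 1}

lemma snoc_injective (m : ℕ) :
    Function.Injective (fun y : Fin m → F2 => (Fin.snoc y 0 : Fin (m+1) → F2)) := by
  intro y y' h
  funext i
  have := congrFun h (Fin.castSucc i)
  simpa [Fin.snoc_castSucc] using this

lemma single_not_mem_image (m : ℕ) :
    Pi.single (Fin.last m) (1:F2)
      ∉ (Finset.univ.erase 0).image (fun y : Fin m → F2 => (Fin.snoc y 0 : Fin (m+1) → F2)) := by
  intro hmem
  obtain ⟨y, _, hy⟩ := Finset.mem_image.mp hmem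
  have := congrFun hy (Fin.last m)
  simp [Fin.snoc_last, Pi.single_eq_same] at this

lemma Uset_card (m : ℕ) : (Uset m).card = 2 ^ m := by
  classical
  rw [Uset, Finset.card_union_of_disjoint (by
    simp only [Finset.disjoint_singleton_right]
    exact single_not_mem_image m)]
  rw [Finset.card_image_of_injective _ (snoc_injective m),
    Finset.card_erase_of_mem (Finset.mem_univ 0), Finset.card_singleton, Finset.card_univ]
  have h2 : Fintype.card (Fin m → F2) = 2 ^ m := by simp [ZMod.card]
  rw [h2]
  have : 1 ≤ 2 ^ m := Nat.one_le_two_pow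
  omega

lemma zero_not_mem_Uset (m : ℕ) : (0 : Fin (m+1) → F2) ∉ Uset m := by
  classical
  rw [Uset]
  intro h
  rcases Finset.mem_union.mp h with h | h
  · obtain ⟨y, hy, hy2⟩ := Finset.mem_image.mp h
    have hy0 : y = 0 := by
      funext i
      have := congrFun hy2 (Fin.castSucc i)
      simpa [Fin.snoc_castSucc] using this
    rw [hy0] at hy
    simp at hy
  · have := Finset.mem_singleton.mp h
    have := congrFun this.symm (Fin.last m)
    simp [Pi.single_eq_same] at this

/-- The linear map `B` built from `(M, v)`. -/
noncomputable def Bmap (m : ℕ) (M : Lin m m) (v : Fin m → F2) : Lin (m+1) m :=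
  (M.comp (LinearMap.funLeft F2 F2 Fin.castSucc))
    + (LinearMap.proj (Fin.last m)).smulRight v

lemma Bmap_apply (m : ℕ) (M : Lin m m) (v : Fin m → F2) (x : Fin (m+1) → F2) :
    Bmap m M v x = M (x ∘ Fin.castSucc) + x (Fin.last m) • v := rfl

lemma Bmap_snoc (m : ℕ) (M : Lin m m) (v : Fin m → F2) (y : Fin m → F2) :
    Bmap m M v (Fin.snoc y 0) = M y := by
  rw [Bmap_apply]
  have h1 : (Fin.snoc y (0:F2) : Fin (m+1) → F2) ∘ Fin.castSucc = y := by
    funext i; simp [Fin.snoc_castSucc]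
  have h2 : (Fin.snoc y (0:F2) : Fin (m+1) → F2) (Fin.last m) = 0 := by
    simp [Fin.snoc_last]
  rw [h1, h2, zero_smul, add_zero]

lemma Bmap_single (m : ℕ) (M : Lin m m) (v : Fin m → F2) :
    Bmap m M v (Pi.single (Fin.last m) 1) = v := by
  rw [Bmap_apply]
  have h1 : (Pi.single (Fin.last m) (1:F2)) ∘ Fin.castSucc = 0 := by
    funext i
    simp only [Function.comp_apply, Pi.zero_apply]
    exact Pi.single_eq_of_ne (M := fun _ : Fin (m+1) => F2) (Fin.castSucc_lt_last i).ne (1:F2)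
  rw [h1, map_zero, zero_add, Pi.single_eq_same, one_smul]

lemma event_holds (a m : ℕ) (ha : 1 ≤ a) (M : Lin m m)
    (hM : a ≤ Module.finrank (ZMod 2) (LinearMap.ker M)) (v : Fin m → F2) :
    2 ^ a - 2 < ((Uset m).filter (fun x => Bmap m M v x = 0)).card := by
  set K : Finset (Fin m → F2) := Finset.univ.filter (fun y => M y = 0) with hK
  have hKcard : K.card = 2 ^ (Module.finrank (ZMod 2) (LinearMap.ker M)) := by
    have h1 : K.card = Fintype.card {y : Fin m → F2 // M y = 0} :=
      (Fintype.card_subtype _).symm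
    have h2 : Nat.card {y : Fin m → F2 // M y = 0} = Nat.card ↥(LinearMap.ker M) :=
      Nat.card_congr (Equiv.subtypeEquivRight (fun y => by simp [LinearMap.mem_ker]))
    have : Fintype ↥(LinearMap.ker M) := Fintype.ofFinite _
    rw [h1, ← Nat.card_eq_fintype_card, h2, Nat.card_eq_fintype_card,
      Module.card_eq_pow_finrank (K := ZMod 2), ZMod.card]
  have h0K : (0 : Fin m → F2) ∈ K := by simp [hK]
  set T : Finset (Fin (m+1) → F2) :=
    (K.erase 0).image (fun y : Fin m → F2 => (Fin.snoc y 0 : Fin (m+1) → F2)) with hT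
  have hTcard : T.card = K.card - 1 := by
    rw [hT, Finset.card_image_of_injective _ (snoc_injective m),
      Finset.card_erase_of_mem h0K]
  have hsub : T ⊆ (Uset m).filter (fun x => Bmap m M v x = 0) := by
    intro x hx
    obtain ⟨y, hy, rfl⟩ := Finset.mem_image.mp hx
    have hyK := Finset.mem_of_mem_erase hy
    have hyne : y ≠ 0 := Finset.ne_of_mem_erase hy
    rw [Finset.mem_filter]
    constructor
    · rw [Uset]
      apply Finset.mem_union_left
      exact Finset.mem_image.mpr ⟨y, by simp [hyne], rfl⟩
    · rw [Bmap_snoc]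
      exact (Finset.mem_filter.mp hyK).2
  have hcard := Finset.card_le_card hsub
  have h2a : 2 ≤ 2 ^ a := by
    calc 2 = 2 ^ 1 := (pow_one 2).symm
    _ ≤ 2 ^ a := Nat.pow_le_pow_right (by norm_num) ha
  have hpow : 2 ^ a ≤ 2 ^ (Module.finrank (ZMod 2) (LinearMap.ker M)) :=
    Nat.pow_le_pow_right (by norm_num) hM
  have h1 : 2 ^ a ≤ K.card := by rw [hKcard]; exact hpow
  rw [hTcard] at hcard
  generalize hp : (2:ℕ) ^ a = p at h2a h1 ⊢
  exact lt_of_lt_of_le (by omega : p - 2 < K.card - 1) hcard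

lemma NB_bound (a m : ℕ) (ha : 1 ≤ a) :
    Nat.card {M : Lin m m // a ≤ Module.finrank (ZMod 2) (LinearMap.ker M)} * 2 ^ m
      ≤ Nat.card {B : Lin (m+1) m //
          2 ^ a - 2 < ((Uset m).filter (fun x => B x = 0)).card} := by
  classical
  have hinj : Function.Injective
      (fun p : ({M : Lin m m // a ≤ Module.finrank (ZMod 2) (LinearMap.ker M)}
          × (Fin m → F2)) =>
        (⟨Bmap m p.1.1 p.2, event_holds a m ha p.1.1 p.1.2 p.2⟩ :
          {B : Lin (m+1) m // 2 ^ a - 2 < ((Uset m).filter (fun x => B x = 0)).card})) := by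
    rintro ⟨M, v⟩ ⟨M', v'⟩ h
    have hB : Bmap m M.1 v = Bmap m M'.1 v' := congrArg Subtype.val h
    have hv : v = v' := by
      rw [← Bmap_single m M.1 v, ← Bmap_single m M'.1 v', hB]
    have hM : M.1 = M'.1 := by
      apply LinearMap.ext
      intro y
      rw [← Bmap_snoc m M.1 v y, ← Bmap_snoc m M'.1 v' y, hB]
    exact Prod.ext (Subtype.ext hM) hv
  have := Nat.card_le_card_of_injective _ hinj
  rw [Nat.card_prod] at this
  have hcf : Nat.card (Fin m → F2) = 2 ^ m := by
    rw [Nat.card_eq_fintype_card]; simp [ZMod.card]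
  rw [hcf] at this
  exact this

open Finset


/-- partial products -/
noncomputable def PP (N : ℕ) : ℝ := ∏ j ∈ Finset.range N, (1 - (2:ℝ)⁻¹ ^ (j+1))

lemma factor_pos {j : ℕ} : 0 < 1 - (2:ℝ)⁻¹ ^ (j+1) := by
  have : (2:ℝ)⁻¹ ^ (j+1) < 1 := pow_lt_one₀ (by norm_num) (by norm_num) (Nat.succ_ne_zero j)
  linarith

lemma factor_le_one {j : ℕ} : 1 - (2:ℝ)⁻¹ ^ (j+1) ≤ 1 := by
  have : (0:ℝ) ≤ (2:ℝ)⁻¹ ^ (j+1) := by positivity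
  linarith

lemma PP_pos (N : ℕ) : 0 < PP N :=
  Finset.prod_pos fun j _ => factor_pos

lemma PP_le_one (N : ℕ) : PP N ≤ 1 :=
  Finset.prod_le_one (fun j _ => le_of_lt factor_pos) (fun j _ => factor_le_one)

lemma sum_geo (N n : ℕ) :
    ∑ j ∈ Finset.range n, (2:ℝ)⁻¹ ^ (N+1+j) = (2:ℝ)⁻¹ ^ N - (2:ℝ)⁻¹ ^ (N+n) := by
  induction n with
  | zero => simp
  | succ n ih =>
    rw [Finset.sum_range_succ, ih, show N+1+n = (N+n)+1 by omega, show N+(n+1) = (N+n)+1 by omega,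
      pow_succ]
    ring

lemma one_sub_sum_le_prod {n : ℕ} (f : ℕ → ℝ) (h0 : ∀ i, 0 ≤ f i) (h1 : ∀ i, f i ≤ 1) :
    1 - ∑ j ∈ Finset.range n, f j ≤ ∏ j ∈ Finset.range n, (1 - f j) := by
  induction n with
  | zero => simp
  | succ n ih =>
    rw [Finset.sum_range_succ, Finset.prod_range_succ]
    have hs : 0 ≤ ∑ j ∈ Finset.range n, f j := Finset.sum_nonneg fun j _ => h0 j
    nlinarith [h0 n, h1 n, ih]

lemma tail_prod (N n : ℕ) :
    1 - (2:ℝ)⁻¹ ^ N ≤ ∏ j ∈ Finset.range n, (1 - (2:ℝ)⁻¹ ^ (N+1+j)) := by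
  have h := one_sub_sum_le_prod (n := n) (fun j => (2:ℝ)⁻¹ ^ (N+1+j))
    (fun i => by positivity) (fun i => by
      apply pow_le_one₀ <;> norm_num)
  rw [sum_geo] at h
  have : (0:ℝ) ≤ (2:ℝ)⁻¹ ^ (N+n) := by positivity
  linarith

lemma gamma_ge (N : ℕ) : PP N * (1 - (2:ℝ)⁻¹ ^ N) ≤ gammaProd := by
  by_cases h : Multipliable (fun j : ℕ => 1 - (2:ℝ)⁻¹ ^ (j+1))
  · refine ge_of_tendsto h.hasProd.tendsto_prod_nat ?_
    refine Filter.eventually_atTop.mpr ⟨N, fun n hn => ?_⟩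
    obtain ⟨k, rfl⟩ : ∃ k, n = N + k := ⟨n - N, by omega⟩
    have hsplit : ∏ j ∈ Finset.range (N + k), (1 - (2:ℝ)⁻¹ ^ (j+1))
        = PP N * ∏ j ∈ Finset.range k, (1 - (2:ℝ)⁻¹ ^ (N+1+j)) := by
      have h2 : ∀ j, 1 - (2:ℝ)⁻¹ ^ (N+1+j) = 1 - (2:ℝ)⁻¹ ^ ((N + j) + 1) := by
        intro j; congr 2; omega
      simp only [h2]
      rw [PP, ← Finset.prod_range_add]
    rw [hsplit]
    exact mul_le_mul_of_nonneg_left (tail_prod N _) (PP_pos N).le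
  · rw [gammaProd, tprod_eq_one_of_not_multipliable h]
    have h1 : (0:ℝ) ≤ 1 - (2:ℝ)⁻¹ ^ N := by
      have : (2:ℝ)⁻¹ ^ N ≤ 1 := by apply pow_le_one₀ <;> norm_num
      linarith
    have h2 : 1 - (2:ℝ)⁻¹ ^ N ≤ 1 := by
      have : (0:ℝ) ≤ (2:ℝ)⁻¹ ^ N := by positivity
      linarith
    calc PP N * (1 - (2:ℝ)⁻¹ ^ N) ≤ 1 * 1 :=
          mul_le_mul (PP_le_one N) h2 h1 (by norm_num)
      _ = 1 := by norm_num

lemma gamma_pos : 0 < gammaProd := by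
  have := gamma_ge 1
  have hP : PP 1 = 1 - (2:ℝ)⁻¹ := by simp [PP]
  rw [hP] at this
  norm_num at this
  linarith

lemma cast_prodsub (N r : ℕ) (h : r ≤ N) :
    ∏ i ∈ Finset.range r, (((2:ℕ)^N - 2^i : ℕ) : ℝ)
      = ∏ i ∈ Finset.range r, ((2:ℝ)^N - 2^i) := by
  refine Finset.prod_congr rfl fun i hi => ?_
  have hi' : i < r := Finset.mem_range.mp hi
  have hle : (2:ℕ)^i ≤ 2^N := Nat.pow_le_pow_right (by norm_num) (by omega)
  rw [Nat.cast_sub hle]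
  push_cast
  ring

lemma prodsub_eq (N r : ℕ) (h : r ≤ N) :
    ∏ i ∈ Finset.range r, ((2:ℝ)^N - 2^i)
      = 2^(r*N) * ∏ j ∈ Finset.range r, (1 - (2:ℝ)⁻¹^(N-r+1+j)) := by
  have step1 : ∏ i ∈ Finset.range r, ((2:ℝ)^N - 2^i)
      = ∏ i ∈ Finset.range r, ((2:ℝ)^N * (1 - (2:ℝ)⁻¹^(N-i))) := by
    refine Finset.prod_congr rfl fun i hi => ?_
    have hi' : i < r := Finset.mem_range.mp hi
    have hsplit : (2:ℝ)^N = 2^i * 2^(N-i) := by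
      rw [← pow_add]; congr 1; omega
    rw [mul_sub, mul_one, inv_pow, hsplit, mul_assoc,
      mul_inv_cancel₀ (pow_ne_zero _ (by norm_num : (2:ℝ) ≠ 0)), mul_one]
  rw [step1, Finset.prod_mul_distrib, Finset.prod_const, Finset.card_range, ← pow_mul]
  congr 1
  · rw [Nat.mul_comm]
  · rw [← Finset.prod_range_reflect (fun j => 1 - (2:ℝ)⁻¹^(N-r+1+j)) r]
    refine Finset.prod_congr rfl fun i hi => ?_
    have hi' : i < r := Finset.mem_range.mp hi
    congr 2
    omega

lemma per_m (a r : ℕ) (ha : 1 ≤ a) (hr : 1 ≤ r) :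
    gammaProd⁻¹ * ((2:ℝ) ^ (a ^ 2))⁻¹ * (1 - (2:ℝ)⁻¹ ^ a) ^ 2 * (1 - (2:ℝ)⁻¹ ^ r)
      ≤ (Nat.card {B : Lin (a+r+1) (a+r) //
            2 ^ a - 2 < ((Uset (a+r)).filter (fun x => B x = 0)).card} : ℝ)
        / (Nat.card (Lin (a+r+1) (a+r)) : ℝ) := by
  have hm : a + r = a + r := rfl
  set m := a + r with hmdef
  set NB := Nat.card {B : Lin (m+1) m //
      2 ^ a - 2 < ((Uset m).filter (fun x => B x = 0)).card} with hNB
  -- ℕ inequality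
  have hN : (∏ i ∈ Finset.range r, (2^m - 2^i))^2 * 2^m
      ≤ (∏ i ∈ Finset.range r, (2^r - 2^i)) * NB := by
    calc (∏ i ∈ Finset.range r, (2^m - 2^i))^2 * 2^m
        ≤ ((∏ i ∈ Finset.range r, (2^r - 2^i))
            * Nat.card {M : Lin m m // a ≤ Module.finrank (ZMod 2) (LinearMap.ker M)}) * 2^m :=
          Nat.mul_le_mul_right _ (comp_count a r m rfl)
      _ = (∏ i ∈ Finset.range r, (2^r - 2^i))
            * (Nat.card {M : Lin m m // a ≤ Module.finrank (ZMod 2) (LinearMap.ker M)} * 2^m) := by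
          ring
      _ ≤ _ := Nat.mul_le_mul_left _ (NB_bound a m ha)
  -- cast to ℝ
  have hR : (∏ i ∈ Finset.range r, ((2:ℝ)^m - 2^i))^2 * 2^m
      ≤ (∏ i ∈ Finset.range r, ((2:ℝ)^r - 2^i)) * (NB : ℝ) := by
    have hcast := (Nat.cast_le (α := ℝ)).mpr hN
    push_cast at hcast
    rw [cast_prodsub m r (by omega), cast_prodsub r r le_rfl] at hcast
    exact hcast
  -- identities
  set Q : ℝ := ∏ j ∈ Finset.range r, (1 - (2:ℝ)⁻¹^(a+1+j)) with hQdef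
  have hPRm : ∏ i ∈ Finset.range r, ((2:ℝ)^m - 2^i) = 2^(r*m) * Q := by
    rw [prodsub_eq m r (by omega), hQdef]
    congr 1
    refine Finset.prod_congr rfl fun j hj => ?_
    congr 2
    omega
  have hGreal : ∏ i ∈ Finset.range r, ((2:ℝ)^r - 2^i) = 2^(r*r) * PP r := by
    rw [prodsub_eq r r le_rfl, PP]
    congr 1
    refine Finset.prod_congr rfl fun j hj => ?_
    congr 2
    omega
  have hQ1 : 1 - (2:ℝ)⁻¹^a ≤ Q := tail_prod a r
  have hx0 : (0:ℝ) ≤ 1 - (2:ℝ)⁻¹^a := by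
    have : (2:ℝ)⁻¹^a ≤ 1 := by apply pow_le_one₀ <;> norm_num
    linarith
  have hy0 : (0:ℝ) < 1 - (2:ℝ)⁻¹^r := by
    have : (2:ℝ)⁻¹^r < 1 := pow_lt_one₀ (by norm_num) (by norm_num) (by omega)
    linarith
  -- core inequality
  have core : gammaProd⁻¹ * (1 - (2:ℝ)⁻¹^a)^2 * (1 - (2:ℝ)⁻¹^r) * PP r ≤ Q^2 := by
    have hgr := gamma_ge r
    have hprpos : (0:ℝ) < PP r * (1 - (2:ℝ)⁻¹^r) := mul_pos (PP_pos r) hy0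
    have hinv : gammaProd⁻¹ ≤ (PP r * (1 - (2:ℝ)⁻¹^r))⁻¹ := by
      apply inv_anti₀ hprpos hgr
    calc gammaProd⁻¹ * (1 - (2:ℝ)⁻¹^a)^2 * (1 - (2:ℝ)⁻¹^r) * PP r
        = gammaProd⁻¹ * ((1 - (2:ℝ)⁻¹^a)^2 * (PP r * (1 - (2:ℝ)⁻¹^r))) := by ring
      _ ≤ (PP r * (1 - (2:ℝ)⁻¹^r))⁻¹ * ((1 - (2:ℝ)⁻¹^a)^2 * (PP r * (1 - (2:ℝ)⁻¹^r))) := by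
          apply mul_le_mul_of_nonneg_right hinv
          have := PP_pos r
          positivity
      _ = (1 - (2:ℝ)⁻¹^a)^2 := by
          rw [mul_comm, mul_assoc, mul_inv_cancel₀ (ne_of_gt hprpos), mul_one]
      _ ≤ Q^2 := pow_le_pow_left₀ hx0 hQ1 2
  -- power bookkeeping
  have hpow : ((2:ℝ)^(a^2))⁻¹ * ((2:ℝ)^(m*(m+1)) * (2:ℝ)^(r*r))
      = (2:ℝ)^(2*(r*m)) * (2:ℝ)^m := by
    have h1 : (2:ℝ)^(m*(m+1)) * (2:ℝ)^(r*r) = (2:ℝ)^(a^2) * ((2:ℝ)^(2*(r*m)) * (2:ℝ)^m) := by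
      rw [← pow_add, ← pow_add, ← pow_add]
      congr 1
      rw [hmdef]
      ring
    rw [h1, inv_mul_cancel_left₀ (by positivity)]
  have hden : (Nat.card (Lin (m+1) m) : ℝ) = (2:ℝ)^(m*(m+1)) := by
    rw [card_Lin]
    push_cast
    ring
  rw [hden, le_div_iff₀ (by positivity)]
  have hGpos : (0:ℝ) < ∏ i ∈ Finset.range r, ((2:ℝ)^r - 2^i) := by
    rw [hGreal]
    have := PP_pos r
    positivity
  refine le_of_mul_le_mul_right ?_ hGpos
  have key : gammaProd⁻¹ * ((2:ℝ)^(a^2))⁻¹ * (1 - (2:ℝ)⁻¹^a)^2 * (1 - (2:ℝ)⁻¹^r)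
        * (2:ℝ)^(m*(m+1)) * (∏ i ∈ Finset.range r, ((2:ℝ)^r - 2^i))
      ≤ (∏ i ∈ Finset.range r, ((2:ℝ)^m - 2^i))^2 * 2^m := by
    rw [hGreal, hPRm]
    calc gammaProd⁻¹ * ((2:ℝ)^(a^2))⁻¹ * (1 - (2:ℝ)⁻¹^a)^2 * (1 - (2:ℝ)⁻¹^r)
          * (2:ℝ)^(m*(m+1)) * ((2:ℝ)^(r*r) * PP r)
        = (gammaProd⁻¹ * (1 - (2:ℝ)⁻¹^a)^2 * (1 - (2:ℝ)⁻¹^r) * PP r)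
            * (((2:ℝ)^(a^2))⁻¹ * ((2:ℝ)^(m*(m+1)) * (2:ℝ)^(r*r))) := by ring
      _ = (gammaProd⁻¹ * (1 - (2:ℝ)⁻¹^a)^2 * (1 - (2:ℝ)⁻¹^r) * PP r)
            * ((2:ℝ)^(2*(r*m)) * (2:ℝ)^m) := by rw [hpow]
      _ ≤ Q^2 * ((2:ℝ)^(2*(r*m)) * (2:ℝ)^m) := by
          apply mul_le_mul_of_nonneg_right core
          positivity
      _ = ((2:ℝ)^(r*m) * Q)^2 * 2^m := by ring
  calc gammaProd⁻¹ * ((2:ℝ)^(a^2))⁻¹ * (1 - (2:ℝ)⁻¹^a)^2 * (1 - (2:ℝ)⁻¹^r)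
        * (2:ℝ)^(m*(m+1)) * (∏ i ∈ Finset.range r, ((2:ℝ)^r - 2^i))
      ≤ (∏ i ∈ Finset.range r, ((2:ℝ)^m - 2^i))^2 * 2^m := key
    _ ≤ (NB : ℝ) * (∏ i ∈ Finset.range r, ((2:ℝ)^r - 2^i)) := by
        rw [mul_comm ((NB:ℝ)) _]
        exact hR

/-- Let γ = ∏_{j=1}^∞ (1 - 2^{-j}) and fix an integer a ≥ 1. For every integer m
there exist n ≥ m and a set U ⊆ F_2^n of 2^m distinct nonzero vectors such that, writing p_m for
the probability that a uniformly random linear map B : F_2^n → F_2^m satisfies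
|{u ∈ U : B u = 0}| > 2^a - 2, one has liminf_{m→∞} p_m ≥ γ^{-1} 2^{-a^2} (1 - 2^{-a})^2. -/
theorem stmt_3 (a : ℕ) (ha : 1 ≤ a) :
    ∃ (n : ℕ → ℕ) (U : (m : ℕ) → Finset (Fin (n m) → ZMod 2)),
      (∀ m, m ≤ n m) ∧
      (∀ m, (U m).card = 2 ^ m) ∧
      (∀ m, (0 : Fin (n m) → ZMod 2) ∉ U m) ∧
      gammaProd⁻¹ * ((2 : ℝ) ^ (a ^ 2))⁻¹ * (1 - (2 : ℝ)⁻¹ ^ a) ^ 2 ≤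
        Filter.liminf (fun m : ℕ =>
          (Nat.card {B : Lin (n m) m //
              2 ^ a - 2 < ((U m).filter (fun x => B x = 0)).card} : ℝ) /
            (Nat.card (Lin (n m) m) : ℝ)) Filter.atTop := by
  refine ⟨fun m => m + 1, fun m => Uset m, fun m => Nat.le_succ m, Uset_card, zero_not_mem_Uset, ?_⟩
  set C : ℝ := gammaProd⁻¹ * ((2:ℝ) ^ (a ^ 2))⁻¹ * (1 - (2:ℝ)⁻¹ ^ a) ^ 2 with hC
  set q : ℕ → ℝ := fun m => C * (1 - (2:ℝ)⁻¹ ^ (m - a)) with hqdef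
  have hq_tendsto : Filter.Tendsto q Filter.atTop (nhds C) := by
    have h1 : Filter.Tendsto (fun m : ℕ => (2:ℝ)⁻¹ ^ (m - a)) Filter.atTop (nhds 0) :=
      (tendsto_pow_atTop_nhds_zero_of_lt_one (by norm_num) (by norm_num)).comp
        (Filter.tendsto_sub_atTop_nat a)
    have h2 : Filter.Tendsto q Filter.atTop (nhds (C * (1 - 0))) :=
      Filter.Tendsto.mul tendsto_const_nhds (Filter.Tendsto.sub tendsto_const_nhds h1)
    simpa using h2
  have hliminfq : Filter.liminf q Filter.atTop = C := hq_tendsto.liminf_eq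
  refine le_trans (le_of_eq hliminfq.symm) (Filter.liminf_le_liminf ?_ ?_ ?_)
  · refine Filter.eventually_atTop.mpr ⟨a + 1, fun m hm => ?_⟩
    have h := per_m a (m - a) ha (by omega)
    rw [show a + (m - a) = m from by omega] at h
    calc q m = C * (1 - (2:ℝ)⁻¹ ^ (m - a)) := rfl
      _ ≤ _ := h
  · exact hq_tendsto.isBoundedUnder_ge
  · apply Filter.IsBoundedUnder.isCoboundedUnder_ge
    refine Filter.isBoundedUnder_of ⟨1, fun m => ?_⟩
    have hden : (0:ℝ) ≤ (Nat.card (Lin (m+1) m) : ℝ) := Nat.cast_nonneg _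
    refine div_le_one_of_le₀ ?_ hden
    exact_mod_cast Nat.cast_le.mpr (Nat.card_le_card_of_injective _ Subtype.coe_injective)
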